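/- Define the CG potential Ψ_k = ‖w_k‖² + F_k/ℓ where w_k = x_k + ρ_k s_k − x*, F_k = 2(f(x_k) − f(x*)), ℓ = λ_min(A), L = λ_max(A). Then (1 + √(ℓ/L)) Ψ_{k+1} ≤ Ψ_k for all k ≥ 1. -/

import Mathlib

open scoped InnerProductSpace

private lemma inner_sq_le {E : Type*} [NormedAddCommGroup E] [InnerProductSpace ℝ E]
    (u v : E) : ⟪u, v⟫_ℝ ^ 2 ≤ ‖u‖ ^ 2 * ‖v‖ ^ 2 := by
  have h := abs_real_inner_le_norm u v
  nlinarith [sq_abs (⟪u, v⟫_ℝ), abs_nonneg (⟪u, v⟫_ℝ), norm_nonneg u, norm_nonneg v]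

private lemma combo_norm {E : Type*} [NormedAddCommGroup E] [InnerProductSpace ℝ E]
    (c : ℝ) (z z' : E) :
    ‖(1 - c) • z + c • z'‖ ^ 2
      = (1 - c) * ‖z‖ ^ 2 + c * ‖z'‖ ^ 2 - (1 - c) * c * ‖z - z'‖ ^ 2 := by
  rw [norm_add_sq_real, norm_sub_sq_real, norm_smul, norm_smul, real_inner_smul_left,
    real_inner_smul_right, Real.norm_eq_abs, Real.norm_eq_abs, mul_pow, mul_pow,
    sq_abs, sq_abs]
  ring

set_option maxHeartbeats 2000000 in
theorem stmt10
    {E : Type*} [NormedAddCommGroup E] [InnerProductSpace ℝ E]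
    (A : E →L[ℝ] E) (b : E)
    (hsymm : ∀ u v : E, ⟪A u, v⟫_ℝ = ⟪u, A v⟫_ℝ)
    (hpos : ∀ u : E, u ≠ 0 → 0 < ⟪A u, u⟫_ℝ)
    (f : E → ℝ) (hf : ∀ z : E, f z = ⟪z, A z⟫_ℝ / 2 - ⟪b, z⟫_ℝ)
    (x p r : ℕ → E) (α β : ℕ → ℝ)
    (hr0 : r 0 = b - A (x 0))
    (hp1 : p 1 = r 0)
    (hβ : ∀ k ≥ 1, β (k + 1) = ‖r k‖ ^ 2 / ‖r (k - 1)‖ ^ 2)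
    (hp : ∀ k ≥ 1, p (k + 1) = β (k + 1) • p k + r k)
    (hα : ∀ k, α (k + 1) = ‖r k‖ ^ 2 / ⟪A (p (k + 1)), p (k + 1)⟫_ℝ)
    (hx : ∀ k, x (k + 1) = x k + α (k + 1) • p (k + 1))
    (hrr : ∀ k, r (k + 1) = r k - α (k + 1) • A (p (k + 1)))
    (hnz : ∀ k, r k ≠ 0)
    (xs : E) (hxs : A xs = b)
    (F : ℕ → ℝ) (hF : ∀ k, F k = 2 * (f (x k) - f xs))
    (s : ℕ → E) (hs : ∀ k ≥ 1, s k = α k • p k)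
    (ρ : ℕ → ℝ) (hρ : ∀ k ≥ 1, ρ k = F k / (α k * ‖r (k - 1)‖ ^ 2))
    (w : ℕ → E) (hw : ∀ k ≥ 1, w k = x k + ρ k • s k - xs)
    (ℓ L : ℝ) (hℓ : 0 < ℓ) (hℓL : ℓ ≤ L)
    (hlow : ∀ u : E, ℓ * ‖u‖ ^ 2 ≤ ⟪A u, u⟫_ℝ)
    (hhigh : ∀ u : E, ⟪A u, u⟫_ℝ ≤ L * ‖u‖ ^ 2)
    (Ψ : ℕ → ℝ) (hΨ : ∀ k ≥ 1, Ψ k = ‖w k‖ ^ 2 + F k / ℓ) :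
    ∀ k ≥ 1, (1 + Real.sqrt (ℓ / L)) * Ψ (k + 1) ≤ Ψ k := by
  have hL : 0 < L := lt_of_lt_of_le hℓ hℓL
  have hrpos : ∀ n, (0:ℝ) < ‖r n‖ ^ 2 := by
    intro n
    exact pow_pos (norm_pos_iff.mpr (hnz n)) 2
  have hrne : ∀ n, (‖r n‖ ^ 2 : ℝ) ≠ 0 := fun n => (hrpos n).ne'
  -- residual identity
  have hres : ∀ n, r n = b - A (x n) := by
    intro n
    induction n with
    | zero => exact hr0
    | succ n ih =>
      rw [hrr n, hx n, map_add, map_smul, ih]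
      abel
  have hAe : ∀ n, A (x n - xs) = -(r n) := by
    intro n
    rw [map_sub, hxs, hres n]
    abel
  -- F as quadratic form
  have hFq : ∀ n, F n = ⟪A (x n - xs), x n - xs⟫_ℝ := by
    intro n
    have e1 : ⟪A (x n), x n⟫_ℝ = ⟪x n, A (x n)⟫_ℝ := hsymm _ _
    have e2 : ⟪A (x n), xs⟫_ℝ = ⟪b, x n⟫_ℝ := by
      rw [hsymm, hxs, real_inner_comm]
    rw [hF, hf, hf, map_sub, hxs]
    simp only [inner_sub_left, inner_sub_right]
    rw [e1, e2, real_inner_comm xs b]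
    ring
  have hFpos : ∀ n, 0 ≤ F n := by
    intro n
    have h1 := hlow (x n - xs)
    have h2 : (0:ℝ) ≤ ℓ * ‖x n - xs‖ ^ 2 := by positivity
    rw [← hFq n] at h1
    linarith
  have her : ∀ n, ⟪x n - xs, r n⟫_ℝ = -(F n) := by
    intro n
    have h1 : r n = -(A (x n - xs)) := by rw [hAe n, neg_neg]
    rw [h1, inner_neg_right, real_inner_comm, ← hFq n]
  -- β identities
  have hβv : ∀ n, β (n + 2) = ‖r (n + 1)‖ ^ 2 / ‖r n‖ ^ 2 := by
    intro n
    have h := hβ (n + 1) (by omega)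
    simpa using h
  have hβ' : ∀ n, β (n + 2) * ‖r n‖ ^ 2 = ‖r (n + 1)‖ ^ 2 := by
    intro n
    rw [hβv n]
    exact div_mul_cancel₀ _ (hrne n)
  have hrApOf : ∀ n, ⟪r (n + 1), r n⟫_ℝ = 0 →
      α (n + 1) * ⟪r (n + 1), A (p (n + 1))⟫_ℝ = -(‖r (n + 1)‖ ^ 2) := by
    intro n h4
    have hAp : α (n + 1) • A (p (n + 1)) = r n - r (n + 1) := by
      rw [hrr n]; abel
    have h := congrArg (fun z : E => ⟪r (n + 1), z⟫_ℝ) hAp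
    simp only [inner_sub_right, real_inner_smul_right, real_inner_self_eq_norm_sq] at h
    rw [h4] at h
    linarith
  -- uniform step: from ⟪r n, p (n+1)⟫ = ‖r n‖² derive positivity and next orthogonality
  have base : ∀ n, ⟪r n, p (n + 1)⟫_ℝ = ‖r n‖ ^ 2 →
      0 < α (n + 1) ∧ α (n + 1) * ⟪A (p (n + 1)), p (n + 1)⟫_ℝ = ‖r n‖ ^ 2
        ∧ ⟪r (n + 1), p (n + 1)⟫_ℝ = 0 := by
    intro n h1
    have hpne : p (n + 1) ≠ 0 := by
      intro h
      rw [h, inner_zero_right] at h1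
      exact hrne n h1.symm
    have hQ : 0 < ⟪A (p (n + 1)), p (n + 1)⟫_ℝ := hpos _ hpne
    have hαQ : α (n + 1) * ⟪A (p (n + 1)), p (n + 1)⟫_ℝ = ‖r n‖ ^ 2 := by
      rw [hα n]
      field_simp
    have hαpos : 0 < α (n + 1) := by
      rw [hα n]
      exact div_pos (hrpos n) hQ
    refine ⟨hαpos, hαQ, ?_⟩
    rw [hrr n, inner_sub_left, real_inner_smul_left, h1]
    linarith
  have conj : ∀ n, α (n + 1) * ⟪A (p (n + 1)), p (n + 1)⟫_ℝ = ‖r n‖ ^ 2 → 0 < α (n + 1) →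
      ⟪r (n + 1), r n⟫_ℝ = 0 → ⟪A (p (n + 2)), p (n + 1)⟫_ℝ = 0 := by
    intro n hαQ hαpos h4
    have hrAp := hrApOf n h4
    have hexp : ⟪A (p (n + 2)), p (n + 1)⟫_ℝ
        = β (n + 2) * ⟪A (p (n + 1)), p (n + 1)⟫_ℝ + ⟪r (n + 1), A (p (n + 1))⟫_ℝ := by
      rw [hp (n + 1) (by omega), map_add, map_smul, inner_add_left, real_inner_smul_left,
        hsymm (r (n + 1)) (p (n + 1))]
    have hmul : α (n + 1) * ⟪A (p (n + 2)), p (n + 1)⟫_ℝ = 0 := by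
      rw [hexp]
      linear_combination β (n + 2) * hαQ + hβ' n + hrAp
    rcases mul_eq_zero.mp hmul with h | h
    · exact absurd h hαpos.ne'
    · exact h
  -- main orthogonality pack
  have hC : ∀ n, ⟪r n, p (n + 1)⟫_ℝ = ‖r n‖ ^ 2
      ∧ 0 < α (n + 1)
      ∧ α (n + 1) * ⟪A (p (n + 1)), p (n + 1)⟫_ℝ = ‖r n‖ ^ 2
      ∧ ⟪r (n + 1), p (n + 1)⟫_ℝ = 0
      ∧ ⟪r (n + 1), r n⟫_ℝ = 0
      ∧ ⟪A (p (n + 2)), p (n + 1)⟫_ℝ = 0 := by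
    intro n
    induction n with
    | zero =>
      have h1 : ⟪r 0, p 1⟫_ℝ = ‖r 0‖ ^ 2 := by
        rw [hp1, real_inner_self_eq_norm_sq]
      obtain ⟨hαpos, hαQ, h3⟩ := base 0 h1
      have h4 : ⟪r 1, r 0⟫_ℝ = 0 := by
        rw [← hp1]; exact h3
      exact ⟨h1, hαpos, hαQ, h3, h4, conj 0 hαQ hαpos h4⟩
    | succ n ih =>
      obtain ⟨ih1, ihα, ihαQ, ih3, ih4, ih7⟩ := ih
      have h1 : ⟪r (n + 1), p (n + 2)⟫_ℝ = ‖r (n + 1)‖ ^ 2 := by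
        rw [hp (n + 1) (by omega), inner_add_right, real_inner_smul_right, ih3,
          real_inner_self_eq_norm_sq]
        ring
      obtain ⟨hαpos, hαQ, h3⟩ := base (n + 1) h1
      have hrp : ⟪r (n + 2), p (n + 1)⟫_ℝ = 0 := by
        rw [hrr (n + 1), inner_sub_left, real_inner_smul_left, ih3, ih7]
        ring
      have h4 : ⟪r (n + 2), r (n + 1)⟫_ℝ = 0 := by
        have hr' : r (n + 1) = p (n + 2) - β (n + 2) • p (n + 1) := by
          rw [hp (n + 1) (by omega)]; abel
        rw [hr', inner_sub_right, real_inner_smul_right, h3, hrp]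
        ring
      exact ⟨h1, hαpos, hαQ, h3, h4, conj (n + 1) hαQ hαpos h4⟩
  -- F recursion
  have hFrec : ∀ n, F (n + 1) = F n - α (n + 1) * ‖r n‖ ^ 2 := by
    intro n
    have he1 : x (n + 1) - xs = (x n - xs) + α (n + 1) • p (n + 1) := by
      rw [hx n]; abel
    have c1 : ⟪A (x n - xs), p (n + 1)⟫_ℝ = -(‖r n‖ ^ 2) := by
      rw [hAe n, inner_neg_left, (hC n).1]
    have c2 : ⟪A (p (n + 1)), x n - xs⟫_ℝ = -(‖r n‖ ^ 2) := by
      rw [hsymm, hAe n, inner_neg_right, real_inner_comm, (hC n).1]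
    have hQv := (hC n).2.2.1
    rw [hFq (n + 1), he1, map_add, map_smul]
    simp only [inner_add_left, inner_add_right, real_inner_smul_left, real_inner_smul_right]
    rw [c1, c2, ← hFq n, hQv]
    ring
  -- bound on curvature of new direction
  have hQle : ∀ n, ⟪A (p (n + 2)), p (n + 2)⟫_ℝ ≤ L * ‖r (n + 1)‖ ^ 2 := by
    intro n
    obtain ⟨h1, hαpos, hαQ, h3, h4, h7⟩ := hC n
    have hrAp := hrApOf n h4
    have hexp : ⟪A (p (n + 2)), p (n + 2)⟫_ℝ
        = β (n + 2) * (β (n + 2) * ⟪A (p (n + 1)), p (n + 1)⟫_ℝ)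
          + 2 * (β (n + 2) * ⟪r (n + 1), A (p (n + 1))⟫_ℝ)
          + ⟪A (r (n + 1)), r (n + 1)⟫_ℝ := by
      rw [hp (n + 1) (by omega), map_add, map_smul]
      simp only [inner_add_left, inner_add_right, real_inner_smul_left, real_inner_smul_right]
      rw [hsymm (r (n + 1)) (p (n + 1)), real_inner_comm (A (p (n + 1))) (r (n + 1))]
      ring
    have hβpos : 0 < β (n + 2) := by
      rw [hβv n]
      exact div_pos (hrpos (n + 1)) (hrpos n)
    have key : β (n + 2) * (β (n + 2) * ⟪A (p (n + 1)), p (n + 1)⟫_ℝ)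
        + 2 * (β (n + 2) * ⟪r (n + 1), A (p (n + 1))⟫_ℝ) ≤ 0 := by
      have h2 : α (n + 1) * (β (n + 2) * (β (n + 2) * ⟪A (p (n + 1)), p (n + 1)⟫_ℝ)
          + 2 * (β (n + 2) * ⟪r (n + 1), A (p (n + 1))⟫_ℝ))
          = -(β (n + 2) * ‖r (n + 1)‖ ^ 2) := by
        linear_combination (β (n + 2) * β (n + 2)) * hαQ + β (n + 2) * hβ' n
          + 2 * β (n + 2) * hrAp
      nlinarith [h2, hαpos, mul_pos hβpos (hrpos (n + 1))]
    linarith [hexp.le, hexp.ge, key, hhigh (r (n + 1))]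
  -- F decreases at least by gradient-step amount
  have hFstep : ∀ n, F (n + 2) ≤ F (n + 1) - ‖r (n + 1)‖ ^ 2 / L := by
    intro n
    obtain ⟨h1, hαpos, hαQ, h3, h4, h7⟩ := hC (n + 1)
    have hQpos : 0 < ⟪A (p (n + 2)), p (n + 2)⟫_ℝ := by
      nlinarith [hαQ, hαpos, hrpos (n + 1)]
    have hstep : ‖r (n + 1)‖ ^ 2 / L ≤ α (n + 2) * ‖r (n + 1)‖ ^ 2 := by
      rw [hα (n + 1), div_mul_eq_mul_div, div_le_div_iff₀ hL hQpos]
      nlinarith [mul_le_mul_of_nonneg_left (hQle n) (hrpos (n + 1)).le]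
    linarith [hFrec (n + 1), hstep]
  -- w identities
  have hρα : ∀ n, ρ (n + 1) * α (n + 1) = F (n + 1) / ‖r n‖ ^ 2 := by
    intro n
    have h : ρ (n + 1) = F (n + 1) / (α (n + 1) * ‖r n‖ ^ 2) := by
      simpa using hρ (n + 1) (by omega)
    rw [h, div_mul_eq_mul_div, mul_comm (F (n + 1)) (α (n + 1)),
      mul_div_mul_left _ _ (hC n).2.1.ne']
  have hwk : ∀ n, w (n + 1) = (x (n + 1) - xs) + (F (n + 1) / ‖r n‖ ^ 2) • p (n + 1) := by
    intro n
    rw [hw (n + 1) (by omega), hs (n + 1) (by omega), smul_smul, hρα n]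
    abel
  have hwrec : ∀ n, w (n + 2) = w (n + 1) + (F (n + 1) / ‖r (n + 1)‖ ^ 2) • r (n + 1) := by
    intro n
    have hb1 : F (n + 1) / ‖r (n + 1)‖ ^ 2 = α (n + 2) + F (n + 2) / ‖r (n + 1)‖ ^ 2 := by
      rw [hFrec (n + 1)]
      field_simp [hrne (n + 1), norm_ne_zero_iff.mpr (hnz (n + 1))]
      ring
    have ha1 : F (n + 1) / ‖r n‖ ^ 2
        = (α (n + 2) + F (n + 2) / ‖r (n + 1)‖ ^ 2) * β (n + 2) := by
      rw [← hb1, hβv n]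
      field_simp [hrne n, hrne (n + 1), norm_ne_zero_iff.mpr (hnz n),
        norm_ne_zero_iff.mpr (hnz (n + 1))]
    rw [hwk (n + 1), hwk n, hx (n + 1), hp (n + 1) (by omega), ha1, hb1]
    module
  have hwr : ∀ n, ⟪w (n + 1), r (n + 1)⟫_ℝ = -(F (n + 1)) := by
    intro n
    have h0 : ⟪p (n + 1), r (n + 1)⟫_ℝ = 0 := by
      rw [real_inner_comm]
      exact (hC n).2.2.2.1
    rw [hwk n, inner_add_left, real_inner_smul_left, her (n + 1), h0]
    ring
  have hwp : ∀ n, ⟪w (n + 1), p (n + 1)⟫_ℝ = 0 := by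
    intro n
    induction n with
    | zero =>
      show ⟪w 1, p 1⟫_ℝ = 0
      have he1r0 : ⟪x 1 - xs, r 0⟫_ℝ = -(F 1) := by
        have hr0' : r 0 = r 1 + α 1 • A (p 1) := by
          rw [hrr 0]; abel
        have hz : ⟪x 1 - xs, A (p 1)⟫_ℝ = 0 := by
          rw [← hsymm (x 1 - xs) (p 1), hAe 1, inner_neg_left, (hC 0).2.2.2.1]
          ring
        rw [hr0', inner_add_right, her 1, real_inner_smul_right, hz]
        ring
      rw [hwk 0, hp1, inner_add_left, real_inner_smul_left, he1r0,
        real_inner_self_eq_norm_sq]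
      field_simp [hrne 0, norm_ne_zero_iff.mpr (hnz 0)]
      ring
    | succ n ih =>
      show ⟪w (n + 2), p (n + 2)⟫_ℝ = 0
      rw [hwrec n, hp (n + 1) (by omega)]
      simp only [inner_add_left, inner_add_right, real_inner_smul_left, real_inner_smul_right]
      rw [ih, hwr n, (hC n).2.2.2.1, real_inner_self_eq_norm_sq]
      field_simp [hrne (n + 1), norm_ne_zero_iff.mpr (hnz (n + 1))]
      ring
  have hwr1 : ∀ n, ⟪w (n + 2), r (n + 1)⟫_ℝ = 0 := by
    intro n
    rw [hwrec n, inner_add_left, real_inner_smul_left, hwr n, real_inner_self_eq_norm_sq]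
    field_simp [hrne (n + 1), norm_ne_zero_iff.mpr (hnz (n + 1))]
    ring
  have hwp1 : ∀ n, ⟪w (n + 2), p (n + 1)⟫_ℝ = 0 := by
    intro n
    rw [hwrec n, inner_add_left, real_inner_smul_left, hwp n, (hC n).2.2.2.1]
    ring
  -- final assembly
  intro k hk
  obtain ⟨n, rfl⟩ : ∃ n, k = n + 1 := ⟨k - 1, by omega⟩
  show (1 + Real.sqrt (ℓ / L)) * Ψ (n + 2) ≤ Ψ (n + 1)
  set c := Real.sqrt (ℓ / L) with hcdef
  have hcsq : c ^ 2 = ℓ / L := Real.sq_sqrt (by positivity)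
  have hcpos : 0 < c := Real.sqrt_pos.mpr (by positivity)
  have hc1 : c ≤ 1 := by
    have h1 : ℓ / L ≤ 1 := (div_le_one hL).mpr hℓL
    nlinarith [hcsq, hcpos]
  have hB1 : ‖(x (n + 1) - xs) + ℓ⁻¹ • r (n + 1)‖ ^ 2
      ≤ ‖r (n + 1)‖ ^ 2 / ℓ ^ 2 - F (n + 1) / ℓ := by
    have hE : ℓ * ‖x (n + 1) - xs‖ ^ 2 ≤ F (n + 1) := by
      rw [hFq (n + 1)]
      exact hlow _
    have h2 : ‖x (n + 1) - xs‖ ^ 2 ≤ F (n + 1) * ℓ⁻¹ := by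
      rw [← div_eq_mul_inv, le_div_iff₀ hℓ]
      linarith
    have hnorm : ‖(x (n + 1) - xs) + ℓ⁻¹ • r (n + 1)‖ ^ 2
        = ‖x (n + 1) - xs‖ ^ 2 + 2 * (ℓ⁻¹ * -(F (n + 1))) + ℓ⁻¹ ^ 2 * ‖r (n + 1)‖ ^ 2 := by
      rw [norm_add_sq_real, real_inner_smul_right, her (n + 1), norm_smul,
        Real.norm_eq_abs, mul_pow, sq_abs]
    rw [hnorm]
    have e1 : ‖r (n + 1)‖ ^ 2 / ℓ ^ 2 = ℓ⁻¹ ^ 2 * ‖r (n + 1)‖ ^ 2 := by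
      field_simp
    have e2 : F (n + 1) / ℓ = F (n + 1) * ℓ⁻¹ := by
      rw [div_eq_mul_inv]
    rw [e1, e2]
    linarith [h2]
  have hB2 : ‖r (n + 1)‖ ^ 2 / ℓ ^ 2
      ≤ ‖w (n + 1) - ((x (n + 1) - xs) + ℓ⁻¹ • r (n + 1))‖ ^ 2 := by
    have hinner : ⟪w (n + 1) - ((x (n + 1) - xs) + ℓ⁻¹ • r (n + 1)), r (n + 1)⟫_ℝ
        = -(‖r (n + 1)‖ ^ 2 / ℓ) := by
      rw [inner_sub_left, inner_add_left, real_inner_smul_left, hwr n, her (n + 1),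
        real_inner_self_eq_norm_sq, div_eq_mul_inv]
      ring
    have h3' := inner_sq_le (w (n + 1) - ((x (n + 1) - xs) + ℓ⁻¹ • r (n + 1))) (r (n + 1))
    rw [hinner] at h3'
    have h3 : (‖r (n + 1)‖ ^ 2 / ℓ) ^ 2
        ≤ ‖w (n + 1) - ((x (n + 1) - xs) + ℓ⁻¹ • r (n + 1))‖ ^ 2 * ‖r (n + 1)‖ ^ 2 := by
      calc (‖r (n + 1)‖ ^ 2 / ℓ) ^ 2 = (-(‖r (n + 1)‖ ^ 2 / ℓ)) ^ 2 := by ring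
        _ ≤ _ := h3'
    have h4 : ‖r (n + 1)‖ ^ 2 / ℓ ^ 2 * ‖r (n + 1)‖ ^ 2
        ≤ ‖w (n + 1) - ((x (n + 1) - xs) + ℓ⁻¹ • r (n + 1))‖ ^ 2 * ‖r (n + 1)‖ ^ 2 := by
      calc ‖r (n + 1)‖ ^ 2 / ℓ ^ 2 * ‖r (n + 1)‖ ^ 2 = (‖r (n + 1)‖ ^ 2 / ℓ) ^ 2 := by
            ring
        _ ≤ _ := h3
    exact le_of_mul_le_mul_right h4 (hrpos (n + 1))
  have hv : w (n + 2) + ((-(c * (F (n + 1) / ‖r n‖ ^ 2))) • p (n + 1)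
        + (c / ℓ - F (n + 1) / ‖r (n + 1)‖ ^ 2) • r (n + 1))
      = (1 - c) • w (n + 1) + c • ((x (n + 1) - xs) + ℓ⁻¹ • r (n + 1)) := by
    rw [hwrec n, hwk n]
    module
  have horth : ⟪w (n + 2), (-(c * (F (n + 1) / ‖r n‖ ^ 2))) • p (n + 1)
        + (c / ℓ - F (n + 1) / ‖r (n + 1)‖ ^ 2) • r (n + 1)⟫_ℝ = 0 := by
    rw [inner_add_right, real_inner_smul_right, real_inner_smul_right, hwp1 n, hwr1 n]
    ring
  have hne : ‖w (n + 2)‖ ^ 2 + ‖(-(c * (F (n + 1) / ‖r n‖ ^ 2))) • p (n + 1)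
        + (c / ℓ - F (n + 1) / ‖r (n + 1)‖ ^ 2) • r (n + 1)‖ ^ 2
      = ‖(1 - c) • w (n + 1) + c • ((x (n + 1) - xs) + ℓ⁻¹ • r (n + 1))‖ ^ 2 := by
    rw [← hv, norm_add_sq_real (w (n + 2)) ((-(c * (F (n + 1) / ‖r n‖ ^ 2))) • p (n + 1)
      + (c / ℓ - F (n + 1) / ‖r (n + 1)‖ ^ 2) • r (n + 1)), horth]
    ring
  have key1 : ‖w (n + 2)‖ ^ 2
      ≤ (1 - c) * ‖w (n + 1)‖ ^ 2 + c * ‖(x (n + 1) - xs) + ℓ⁻¹ • r (n + 1)‖ ^ 2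
        - (1 - c) * c * ‖w (n + 1) - ((x (n + 1) - xs) + ℓ⁻¹ • r (n + 1))‖ ^ 2 := by
    have h0 : (0:ℝ) ≤ ‖(-(c * (F (n + 1) / ‖r n‖ ^ 2))) • p (n + 1)
        + (c / ℓ - F (n + 1) / ‖r (n + 1)‖ ^ 2) • r (n + 1)‖ ^ 2 := by positivity
    linarith [hne, combo_norm c (w (n + 1)) ((x (n + 1) - xs) + ℓ⁻¹ • r (n + 1))]
  have t1 : c * ‖(x (n + 1) - xs) + ℓ⁻¹ • r (n + 1)‖ ^ 2
      ≤ c * (‖r (n + 1)‖ ^ 2 / ℓ ^ 2 - F (n + 1) / ℓ) :=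
    mul_le_mul_of_nonneg_left hB1 hcpos.le
  have t2 : (1 - c) * c * (‖r (n + 1)‖ ^ 2 / ℓ ^ 2)
      ≤ (1 - c) * c * ‖w (n + 1) - ((x (n + 1) - xs) + ℓ⁻¹ • r (n + 1))‖ ^ 2 :=
    mul_le_mul_of_nonneg_left hB2 (mul_nonneg (by linarith) hcpos.le)
  have e4 : (F (n + 1) - ‖r (n + 1)‖ ^ 2 / L) / ℓ
      = F (n + 1) / ℓ - ‖r (n + 1)‖ ^ 2 / (ℓ * L) := by
    rw [sub_div, div_div, mul_comm L ℓ]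
  have t3 : F (n + 2) / ℓ ≤ F (n + 1) / ℓ - ‖r (n + 1)‖ ^ 2 / (ℓ * L) := by
    rw [← e4]
    exact div_le_div_of_nonneg_right (hFstep n) hℓ.le
  have hRid : c ^ 2 * (‖r (n + 1)‖ ^ 2 / ℓ ^ 2) = ‖r (n + 1)‖ ^ 2 / (ℓ * L) := by
    rw [hcsq]
    field_simp [hℓ.ne', hL.ne']
  have hΨpos : (0:ℝ) ≤ ‖w (n + 1)‖ ^ 2 + F (n + 1) / ℓ :=
    add_nonneg (by positivity) (div_nonneg (hFpos (n + 1)) hℓ.le)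
  rw [hΨ (n + 2) (by omega), hΨ (n + 1) (by omega)]
  set Z := ‖(x (n + 1) - xs) + ℓ⁻¹ • r (n + 1)‖ ^ 2 with hZdef
  set D := ‖w (n + 1) - ((x (n + 1) - xs) + ℓ⁻¹ • r (n + 1))‖ ^ 2 with hDdef
  set W2 := ‖w (n + 2)‖ ^ 2 with hW2def
  set W1 := ‖w (n + 1)‖ ^ 2 with hW1def
  set R2 := ‖r (n + 1)‖ ^ 2 with hR2def
  set F1 := F (n + 1) with hF1def
  set F2 := F (n + 2) with hF2def
  have s1 : W2 + F2 / ℓ ≤ (1 - c) * (W1 + F1 / ℓ) := by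
    linarith [key1, t1, t2, t3, hRid]
  linarith [mul_le_mul_of_nonneg_left s1 (by linarith : (0:ℝ) ≤ 1 + c),
    mul_nonneg (mul_nonneg hcpos.le hcpos.le) hΨpos]
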